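/- arXiv:1204.0566 — 8 statements merged into one kernel-verified Lean document; each statement's English description precedes it below -/
import Mathlib

section
/- For any u ≠ 0, set ν = L̂(u)/‖u‖ in the slack-constrained problem max_{‖w‖≤1, ξ⪰0, 1ᵀξ≤nν} minᵢ (yᵢ⟨w,Φ(xᵢ)⟩ + ξᵢ). Let w̄ with ‖w̄‖ ≤ 1 be an ε̄-suboptimal solution with objective value γ > 0, and set w = w̄/γ. If ε̄‖u‖ < 1, then ‖w‖ ≤ ‖u‖/(1 − ε̄‖u‖) and L̂(w) ≤ L̂(u)/(1 − ε̄‖u‖). -/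
set_option maxHeartbeats 1000000


open Finset

/-- Empirical hinge loss `L̂(w) = (1/n) Σᵢ max(0, 1 − yᵢ⟨w,Φ(xᵢ)⟩)`. -/
noncomputable def empHinge {H : Type*} [NormedAddCommGroup H] [InnerProductSpace ℝ H]
    (n : ℕ) (y : Fin n → ℝ) (Φ : Fin n → H) (w : H) : ℝ :=
  (1 / (n : ℝ)) * ∑ i, max 0 (1 - y i * (inner ℝ w (Φ i) : ℝ))

/-- The slack-constrained objective value of a given `w`:
`max_{ξ⪰0, 1ᵀξ≤nν} minᵢ (yᵢ⟨w,Φ(xᵢ)⟩ + ξᵢ)`. -/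
noncomputable def slackVal {H : Type*} [NormedAddCommGroup H] [InnerProductSpace ℝ H]
    (n : ℕ) (ν : ℝ) (y : Fin n → ℝ) (Φ : Fin n → H) (w : H) : ℝ :=
  ⨆ ξ ∈ {ξ : Fin n → ℝ | (∀ i, 0 ≤ ξ i) ∧ ∑ i, ξ i ≤ (n : ℝ) * ν},
    ⨅ i : Fin n, (y i * (inner ℝ w (Φ i) : ℝ) + ξ i)

theorem slack_constrained_suboptimality
    {H : Type*} [NormedAddCommGroup H] [InnerProductSpace ℝ H]
    (n : ℕ) (hn : 0 < n)
    (y : Fin n → ℝ) (hy : ∀ i, y i = 1 ∨ y i = -1) (Φ : Fin n → H)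
    (u : H) (hu : u ≠ 0)
    (ν : ℝ) (hν : ν = empHinge n y Φ u / ‖u‖)
    (wbar : H) (hwbar : ‖wbar‖ ≤ 1)
    (εbar γ : ℝ) (hεbar : 0 ≤ εbar)
    (hγ : γ = slackVal n ν y Φ wbar) (hγpos : 0 < γ)
    -- `wbar` is `εbar`-suboptimal for the slack-constrained problem
    (hsub : ∀ w : H, ‖w‖ ≤ 1 → slackVal n ν y Φ w ≤ γ + εbar)
    (hlt : εbar * ‖u‖ < 1) :
    ‖γ⁻¹ • wbar‖ ≤ ‖u‖ / (1 - εbar * ‖u‖) ∧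
      empHinge n y Φ (γ⁻¹ • wbar) ≤ empHinge n y Φ u / (1 - εbar * ‖u‖) := by
  have hnR : (0:ℝ) < n := by exact_mod_cast hn
  haveI : Nonempty (Fin n) := ⟨⟨0, hn⟩⟩
  have hupos : 0 < ‖u‖ := norm_pos_iff.mpr hu
  have hLnn : 0 ≤ empHinge n y Φ u := by
    apply mul_nonneg (by positivity)
    exact Finset.sum_nonneg fun i _ => le_max_left _ _
  have hν0 : 0 ≤ ν := by rw [hν]; positivity
  have hdpos : 0 < 1 - εbar * ‖u‖ := by linarith
  have i0 : Fin n := ⟨0, hn⟩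
  -- Step 1 : slackVal at u/‖u‖ is at least ‖u‖⁻¹
  set v : H := ‖u‖⁻¹ • u with hv
  have hv1 : ‖v‖ = 1 := by
    rw [hv, norm_smul, norm_inv, norm_norm, inv_mul_cancel₀ (ne_of_gt hupos)]
  set ξ₀ : Fin n → ℝ := fun i => ‖u‖⁻¹ * max 0 (1 - y i * (inner ℝ u (Φ i) : ℝ)) with hξ₀
  have hξ₀mem : ξ₀ ∈ {ξ : Fin n → ℝ | (∀ i, 0 ≤ ξ i) ∧ ∑ i, ξ i ≤ (n : ℝ) * ν} := by
    constructor
    · intro i; exact mul_nonneg (by positivity) (le_max_left _ _)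
    · have hnν : (n : ℝ) * ν = (∑ i, max 0 (1 - y i * (inner ℝ u (Φ i) : ℝ))) / ‖u‖ := by
        rw [hν, empHinge]; field_simp
      rw [← Finset.mul_sum, hnν, div_eq_inv_mul]
  -- boundedness of the slack objective for v
  have hbdd : BddAbove (Set.range fun ξ : Fin n → ℝ =>
      ⨆ _ : ξ ∈ {ξ : Fin n → ℝ | (∀ i, 0 ≤ ξ i) ∧ ∑ i, ξ i ≤ (n : ℝ) * ν},
        ⨅ i : Fin n, (y i * (inner ℝ v (Φ i) : ℝ) + ξ i)) := by
    refine ⟨max (y i0 * (inner ℝ v (Φ i0) : ℝ) + (n : ℝ) * ν) 0, ?_⟩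
    rintro x ⟨ξ, rfl⟩
    dsimp only
    by_cases hmem : ξ ∈ {ξ : Fin n → ℝ | (∀ i, 0 ≤ ξ i) ∧ ∑ i, ξ i ≤ (n : ℝ) * ν}
    · rw [ciSup_pos hmem]
      refine le_trans ?_ (le_max_left _ _)
      have h1 : (⨅ i : Fin n, (y i * (inner ℝ v (Φ i) : ℝ) + ξ i)) ≤
          y i0 * (inner ℝ v (Φ i0) : ℝ) + ξ i0 :=
        ciInf_le (Set.Finite.bddBelow (Set.finite_range _)) i0
      have h2 : ξ i0 ≤ (n : ℝ) * ν :=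
        le_trans (Finset.single_le_sum (fun i _ => hmem.1 i) (Finset.mem_univ i0)) hmem.2
      linarith
    · haveI : IsEmpty (ξ ∈ {ξ : Fin n → ℝ | (∀ i, 0 ≤ ξ i) ∧ ∑ i, ξ i ≤ (n : ℝ) * ν}) :=
        ⟨hmem⟩
      rw [Real.iSup_of_isEmpty]
      exact le_max_right _ _
  have hinf₀ : ‖u‖⁻¹ ≤ ⨅ i : Fin n, (y i * (inner ℝ v (Φ i) : ℝ) + ξ₀ i) := by
    apply le_ciInf
    intro i
    have : (inner ℝ v (Φ i) : ℝ) = ‖u‖⁻¹ * (inner ℝ u (Φ i) : ℝ) := real_inner_smul_left _ _ _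
    rw [this, hξ₀]
    have h1 : 1 - y i * (inner ℝ u (Φ i) : ℝ) ≤ max 0 (1 - y i * (inner ℝ u (Φ i) : ℝ)) :=
      le_max_right _ _
    have h2 : (0:ℝ) < ‖u‖⁻¹ := by positivity
    nlinarith [mul_le_mul_of_nonneg_left h1 (le_of_lt h2)]
  have hval : ‖u‖⁻¹ ≤ slackVal n ν y Φ v := by
    rw [slackVal]
    refine le_trans ?_ (le_ciSup hbdd ξ₀)
    rw [ciSup_pos hξ₀mem]
    exact hinf₀
  have hγlb : ‖u‖⁻¹ - εbar ≤ γ := by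
    have := hsub v (le_of_eq hv1)
    linarith [le_trans hval this]
  have hγlb' : (1 - εbar * ‖u‖) / ‖u‖ ≤ γ := by
    rw [sub_div]
    have : εbar * ‖u‖ / ‖u‖ = εbar := by field_simp
    rw [this, one_div]
    exact hγlb
  have hfrac : 0 < (1 - εbar * ‖u‖) / ‖u‖ := by positivity
  -- first conclusion
  have hinv : γ⁻¹ ≤ ‖u‖ / (1 - εbar * ‖u‖) := by
    have h := inv_anti₀ hfrac hγlb'
    rwa [inv_div] at h
  constructor
  · rw [norm_smul, norm_inv, Real.norm_eq_abs, abs_of_pos hγpos]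
    calc γ⁻¹ * ‖wbar‖ ≤ γ⁻¹ * 1 := by
          exact mul_le_mul_of_nonneg_left hwbar (by positivity)
      _ = γ⁻¹ := mul_one _
      _ ≤ ‖u‖ / (1 - εbar * ‖u‖) := hinv
  -- second conclusion
  · have key : empHinge n y Φ (γ⁻¹ • wbar) ≤ ν / γ := by
      apply le_of_forall_pos_le_add
      intro ε hε
      -- pick δ = min (ε*γ) (γ/2)
      set δ : ℝ := min (ε * γ) (γ / 2) with hδdef
      have hδpos : 0 < δ := lt_min (by positivity) (by positivity)
      have hδγ : δ < γ := lt_of_le_of_lt (min_le_right _ _) (by linarith)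
      have hlt2 : γ - δ < slackVal n ν y Φ wbar := by rw [← hγ]; linarith
      rw [slackVal] at hlt2
      obtain ⟨ξ, hξ⟩ := exists_lt_of_lt_ciSup hlt2
      have hmem : ξ ∈ {ξ : Fin n → ℝ | (∀ i, 0 ≤ ξ i) ∧ ∑ i, ξ i ≤ (n : ℝ) * ν} := by
        by_contra hmem
        haveI : IsEmpty (ξ ∈ {ξ : Fin n → ℝ | (∀ i, 0 ≤ ξ i) ∧ ∑ i, ξ i ≤ (n : ℝ) * ν}) :=
          ⟨hmem⟩
        rw [Real.iSup_of_isEmpty] at hξ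
        linarith
      rw [ciSup_pos hmem] at hξ
      have hξi : ∀ i, γ - δ ≤ y i * (inner ℝ wbar (Φ i) : ℝ) + ξ i := by
        intro i
        exact le_trans (le_of_lt hξ) (ciInf_le (Set.Finite.bddBelow (Set.finite_range _)) i)
      have hterm : ∀ i, max 0 (1 - y i * (inner ℝ (γ⁻¹ • wbar) (Φ i) : ℝ)) ≤
          γ⁻¹ * (δ + ξ i) := by
        intro i
        have hip : (inner ℝ (γ⁻¹ • wbar) (Φ i) : ℝ) = γ⁻¹ * (inner ℝ wbar (Φ i) : ℝ) :=
          real_inner_smul_left _ _ _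
        rw [hip]
        apply max_le
        · exact mul_nonneg (by positivity) (by linarith [hmem.1 i, hδpos])
        · have h := hξi i
          have hγinv : (0:ℝ) < γ⁻¹ := by positivity
          have : γ - δ - ξ i ≤ y i * (inner ℝ wbar (Φ i) : ℝ) := by linarith
          have h2 := mul_le_mul_of_nonneg_left this (le_of_lt hγinv)
          have h3 : γ⁻¹ * γ = 1 := inv_mul_cancel₀ (ne_of_gt hγpos)
          nlinarith
      have hsumle : ∑ i, max 0 (1 - y i * (inner ℝ (γ⁻¹ • wbar) (Φ i) : ℝ)) ≤
          γ⁻¹ * ((n : ℝ) * δ + (n : ℝ) * ν) := by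
        calc ∑ i, max 0 (1 - y i * (inner ℝ (γ⁻¹ • wbar) (Φ i) : ℝ))
            ≤ ∑ i : Fin n, γ⁻¹ * (δ + ξ i) := Finset.sum_le_sum fun i _ => hterm i
          _ = γ⁻¹ * ((n : ℝ) * δ + ∑ i, ξ i) := by
              rw [← Finset.mul_sum, Finset.sum_add_distrib, Finset.sum_const,
                Finset.card_univ, Fintype.card_fin, nsmul_eq_mul]
          _ ≤ γ⁻¹ * ((n : ℝ) * δ + (n : ℝ) * ν) := by
              apply mul_le_mul_of_nonneg_left _ (by positivity)
              linarith [hmem.2]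
      have hE : empHinge n y Φ (γ⁻¹ • wbar) ≤ (δ + ν) / γ := by
        rw [empHinge]
        rw [div_eq_mul_inv, ← mul_le_mul_iff_right₀ hnR]
        calc (n:ℝ) * ((1 / (n:ℝ)) * ∑ i, max 0 (1 - y i * (inner ℝ (γ⁻¹ • wbar) (Φ i) : ℝ)))
            = ∑ i, max 0 (1 - y i * (inner ℝ (γ⁻¹ • wbar) (Φ i) : ℝ)) := by
              rw [one_div, mul_inv_cancel_left₀ hnR.ne']
          _ ≤ γ⁻¹ * ((n : ℝ) * δ + (n : ℝ) * ν) := hsumle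
          _ = (n:ℝ) * ((δ + ν) * γ⁻¹) := by ring
      have hδε : δ ≤ ε * γ := min_le_left _ _
      calc empHinge n y Φ (γ⁻¹ • wbar) ≤ (δ + ν) / γ := hE
        _ ≤ (ε * γ + ν) / γ := by
            apply div_le_div_of_nonneg_right _ hγpos.le
            linarith
        _ = ν / γ + ε := by rw [add_div, mul_div_assoc, div_self hγpos.ne', mul_one]; ring
    have hstep : ν / γ ≤ empHinge n y Φ u / (1 - εbar * ‖u‖) := by
      have h1 : ν / γ ≤ ν / ((1 - εbar * ‖u‖) / ‖u‖) :=
        div_le_div_of_nonneg_left hν0 hfrac hγlb'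
      have h2 : ν / ((1 - εbar * ‖u‖) / ‖u‖) = empHinge n y Φ u / (1 - εbar * ‖u‖) := by
        rw [hν]
        field_simp
      linarith [h1, h2.le, h2.ge]
    linarith [key, hstep]
end

section
/- Fix c ∈ ℝⁿ, V > 0, and let γ satisfy Σᵢ (γ − cᵢ)₊ = V. Let S = {i : cᵢ ≤ γ} and let p* be the uniform distribution on S. Then p* is a minimizer of p ↦ pᵀ(c + ξ*) over the probability simplex, where ξ*ᵢ = (γ − cᵢ)₊, and moreover (p*, ξ*) is a minimax optimal pair: ξ* maximizes ξ ↦ (p*)ᵀ(c+ξ) over {ξ ⪰ 0, 1ᵀξ ≤ V}. -/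
open Finset

theorem uniform_on_wet_set_minimax_optimal
    (n : ℕ) (hn : 0 < n) (c : Fin n → ℝ) (V γ : ℝ) (hV : 0 < V)
    -- the water level equation Σᵢ (γ − cᵢ)₊ = V
    (hγ : ∑ i, max 0 (γ - c i) = V) :
    -- p*, the uniform distribution on S = {i : cᵢ ≤ γ}, is a probability vector
    (∀ i, 0 ≤ (if c i ≤ γ then ((Finset.univ.filter (fun j : Fin n => c j ≤ γ)).card : ℝ)⁻¹ else 0)) ∧
    (∑ i, (if c i ≤ γ then ((Finset.univ.filter (fun j : Fin n => c j ≤ γ)).card : ℝ)⁻¹ else 0)) = 1 ∧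
    -- p* minimizes p ↦ pᵀ(c + ξ*) over the probability simplex, where ξ*ᵢ = (γ − cᵢ)₊
    (∀ p : Fin n → ℝ, (∀ i, 0 ≤ p i) → ∑ i, p i = 1 →
      ∑ i, (if c i ≤ γ then ((Finset.univ.filter (fun j : Fin n => c j ≤ γ)).card : ℝ)⁻¹ else 0) *
          (c i + max 0 (γ - c i)) ≤
        ∑ i, p i * (c i + max 0 (γ - c i))) ∧
    -- ξ* maximizes ξ ↦ (p*)ᵀ(c + ξ) over {ξ ⪰ 0, 1ᵀξ ≤ V}
    (∀ ξ : Fin n → ℝ, (∀ i, 0 ≤ ξ i) → ∑ i, ξ i ≤ V →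
      ∑ i, (if c i ≤ γ then ((Finset.univ.filter (fun j : Fin n => c j ≤ γ)).card : ℝ)⁻¹ else 0) *
          (c i + ξ i) ≤
        ∑ i, (if c i ≤ γ then ((Finset.univ.filter (fun j : Fin n => c j ≤ γ)).card : ℝ)⁻¹ else 0) *
          (c i + max 0 (γ - c i))) := by
  set S := Finset.univ.filter (fun j : Fin n => c j ≤ γ) with hSdef
  -- S is nonempty
  have hSne : S.Nonempty := by
    by_contra h
    rw [Finset.not_nonempty_iff_eq_empty] at h
    have h0 : ∑ i, max 0 (γ - c i) = 0 := by
      apply Finset.sum_eq_zero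
      intro i _
      have hi : ¬ c i ≤ γ := by
        intro hc
        have : i ∈ S := by simp [hSdef, hc]
        simp [h] at this
      have : γ - c i < 0 := by linarith [not_le.mp hi]
      simp [max_eq_left (le_of_lt this)]
    linarith
  have hk0 : 0 < (S.card : ℝ) := by
    exact_mod_cast Finset.card_pos.mpr hSne
  have hkne : (S.card : ℝ) ≠ 0 := ne_of_gt hk0
  -- generic sum reduction
  have hsum : ∀ f : Fin n → ℝ,
      ∑ i, (if c i ≤ γ then ((S.card : ℝ))⁻¹ else 0) * f i
        = (S.card : ℝ)⁻¹ * ∑ i ∈ S, f i := by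
    intro f
    rw [Finset.mul_sum]
    rw [hSdef, Finset.sum_filter]
    apply Finset.sum_congr rfl
    intro i _
    by_cases h : c i ≤ γ <;> simp [h]
  -- value at members of S
  have hval : ∀ i ∈ S, c i + max 0 (γ - c i) = γ := by
    intro i hi
    have : c i ≤ γ := by simpa [hSdef] using hi
    rw [max_eq_right (by linarith)]; ring
  -- V = ∑_{i∈S} (γ - c i)
  have hVS : ∑ i ∈ S, (γ - c i) = V := by
    rw [← hγ, Finset.sum_filter]
    symm
    apply Finset.sum_congr rfl
    intro i _
    by_cases h : c i ≤ γ
    · simp [h, max_eq_right (by linarith : (0:ℝ) ≤ γ - c i)]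
    · simp [h, max_eq_left (by linarith [not_le.mp h] : γ - c i ≤ 0)]
  have hcS : ∑ i ∈ S, c i = (S.card : ℝ) * γ - V := by
    have := hVS
    rw [Finset.sum_sub_distrib, Finset.sum_const, nsmul_eq_mul] at this
    linarith
  -- the common optimal value is γ
  have hopt : ∑ i, (if c i ≤ γ then ((S.card : ℝ))⁻¹ else 0) * (c i + max 0 (γ - c i)) = γ := by
    rw [hsum]
    rw [Finset.sum_congr rfl hval, Finset.sum_const, nsmul_eq_mul]
    field_simp
  refine ⟨?_, ?_, ?_, ?_⟩
  · intro i
    by_cases h : c i ≤ γ <;> simp [h, le_of_lt (inv_pos.mpr hk0)]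
  · have := hsum (fun _ => 1)
    simpa [mul_one] using this.trans (by simp [hkne])
  · intro p hp hp1
    rw [hopt]
    calc γ = ∑ i, p i * γ := by rw [← Finset.sum_mul, hp1, one_mul]
      _ ≤ ∑ i, p i * (c i + max 0 (γ - c i)) := by
          apply Finset.sum_le_sum
          intro i _
          apply mul_le_mul_of_nonneg_left _ (hp i)
          rcases le_or_gt (c i) γ with h | h
          · rw [max_eq_right (by linarith)]; linarith
          · have : max 0 (γ - c i) = 0 := max_eq_left (by linarith)
            rw [this]; linarith
  · intro ξ hξ hξV
    rw [hopt, hsum]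
    have h1 : ∑ i ∈ S, (c i + ξ i) ≤ ∑ i ∈ S, c i + V := by
      rw [Finset.sum_add_distrib]
      have : ∑ i ∈ S, ξ i ≤ ∑ i, ξ i :=
        Finset.sum_le_sum_of_subset_of_nonneg (Finset.subset_univ S) (fun i _ _ => hξ i)
      linarith
    calc (S.card : ℝ)⁻¹ * ∑ i ∈ S, (c i + ξ i)
        ≤ (S.card : ℝ)⁻¹ * ((S.card : ℝ) * γ) := by
          apply mul_le_mul_of_nonneg_left _ (le_of_lt (inv_pos.mpr hk0))
          rw [hcS] at h1; linarith
      _ = γ := by field_simp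
end

section
/- Let M be the number of mistakes made by the online Perceptron on a sequence (x₁,y₁),…,(xₙ,yₙ) with ‖Φ(xᵢ)‖ ≤ r. Then for any u, M ≤ Σ_{i∈M} ℓ(yᵢ⟨u,Φ(xᵢ)⟩) + r‖u‖√(Σ_{i∈M} ℓ(yᵢ⟨u,Φ(xᵢ)⟩)) + r²‖u‖², where ℓ(a) = max(0,1−a) and the sums are over the mistake rounds; in particular M ≤ Σᵢ ℓ(yᵢ⟨u,Φ(xᵢ)⟩) + r‖u‖√(Σᵢ ℓ(yᵢ⟨u,Φ(xᵢ)⟩)) + r²‖u‖². -/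
open Finset

lemma perceptron_aux {m L a : ℝ} (hm : 0 ≤ m) (hL : 0 ≤ L) (ha : 0 ≤ a)
    (h : m ≤ L + a * Real.sqrt m) : m ≤ L + a * Real.sqrt L + a ^ 2 := by
  have hs0 : 0 ≤ Real.sqrt m := Real.sqrt_nonneg m
  have ht0 : 0 ≤ Real.sqrt L := Real.sqrt_nonneg L
  have hs2 : Real.sqrt m ^ 2 = m := Real.sq_sqrt hm
  have ht2 : Real.sqrt L ^ 2 = L := Real.sq_sqrt hL
  rcases le_or_gt (Real.sqrt m) (Real.sqrt L + a) with hcase | hcase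
  · nlinarith
  · nlinarith [mul_le_mul_of_nonneg_left hcase.le hs0]

theorem perceptron_mistake_bound
    {H : Type*} [NormedAddCommGroup H] [InnerProductSpace ℝ H]
    (n : ℕ) (r : ℝ) (hr : 0 ≤ r)
    (y : Fin n → ℝ) (hy : ∀ i, y i = 1 ∨ y i = -1)
    (Φ : Fin n → H) (hΦ : ∀ i, ‖Φ i‖ ≤ r)
    (w : ℕ → H) (hw0 : w 0 = 0)
    -- online Perceptron updates
    (hstep : ∀ i : Fin n,
      w ((i : ℕ) + 1) =
        if y i * (inner ℝ (w (i : ℕ)) (Φ i) : ℝ) ≤ 0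
        then w (i : ℕ) + y i • Φ i
        else w (i : ℕ))
    (u : H) :
    -- mistake bound with hinge losses summed over the mistake rounds
    (((Finset.univ.filter
        (fun i : Fin n => y i * (inner ℝ (w (i : ℕ)) (Φ i) : ℝ) ≤ 0)).card : ℝ) ≤
      (∑ i ∈ Finset.univ.filter
          (fun i : Fin n => y i * (inner ℝ (w (i : ℕ)) (Φ i) : ℝ) ≤ 0),
        max 0 (1 - y i * (inner ℝ u (Φ i) : ℝ))) +
      r * ‖u‖ * Real.sqrt (∑ i ∈ Finset.univ.filter
          (fun i : Fin n => y i * (inner ℝ (w (i : ℕ)) (Φ i) : ℝ) ≤ 0),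
        max 0 (1 - y i * (inner ℝ u (Φ i) : ℝ))) +
      r ^ 2 * ‖u‖ ^ 2) ∧
    -- in particular, with hinge losses summed over all rounds
    (((Finset.univ.filter
        (fun i : Fin n => y i * (inner ℝ (w (i : ℕ)) (Φ i) : ℝ) ≤ 0)).card : ℝ) ≤
      (∑ i, max 0 (1 - y i * (inner ℝ u (Φ i) : ℝ))) +
      r * ‖u‖ * Real.sqrt (∑ i, max 0 (1 - y i * (inner ℝ u (Φ i) : ℝ))) +
      r ^ 2 * ‖u‖ ^ 2) := by
  set M : Finset (Fin n) := Finset.univ.filter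
    (fun i : Fin n => y i * (inner ℝ (w (i : ℕ)) (Φ i) : ℝ) ≤ 0) with hM
  -- Key induction: representation of w k and norm bound
  have key : ∀ k : ℕ, k ≤ n →
      w k = (∑ i ∈ M.filter (fun i : Fin n => (i : ℕ) < k), y i • Φ i) ∧
      ‖w k‖ ^ 2 ≤ ((M.filter (fun i : Fin n => (i : ℕ) < k)).card : ℝ) * r ^ 2 := by
    intro k
    induction k with
    | zero =>
      intro _
      have he : M.filter (fun i : Fin n => (i : ℕ) < 0) = ∅ := by
        apply Finset.filter_false_of_mem; intro i _; omega
      rw [he, hw0]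
      simp
    | succ k ih =>
      intro hk
      obtain ⟨ih1, ih2⟩ := ih (by omega)
      have hkn : k < n := by omega
      set i0 : Fin n := ⟨k, hkn⟩ with hi0
      have hval : (i0 : ℕ) = k := rfl
      have hs := hstep i0
      rw [hval] at hs
      by_cases hc : y i0 * (inner ℝ (w k) (Φ i0) : ℝ) ≤ 0
      · have hmem : i0 ∈ M := by
          rw [hM, Finset.mem_filter]
          exact ⟨Finset.mem_univ _, by rw [hval]; exact hc⟩
        have hnot : i0 ∉ M.filter (fun i : Fin n => (i : ℕ) < k) := by
          simp [hval]
        have hins : M.filter (fun i : Fin n => (i : ℕ) < k + 1)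
            = insert i0 (M.filter (fun i : Fin n => (i : ℕ) < k)) := by
          ext j
          simp only [Finset.mem_filter, Finset.mem_insert]
          constructor
          · rintro ⟨hj, hjk⟩
            rcases Nat.lt_succ_iff_lt_or_eq.mp hjk with h | h
            · exact Or.inr ⟨hj, h⟩
            · exact Or.inl (Fin.ext h)
          · rintro (rfl | ⟨hj, hjk⟩)
            · exact ⟨hmem, Nat.lt_succ_self k⟩
            · exact ⟨hj, by omega⟩
        have hwk1 : w (k + 1) = w k + y i0 • Φ i0 := by rw [hs, if_pos hc]
        constructor
        · rw [hins, Finset.sum_insert hnot, ← ih1, hwk1]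
          exact (add_comm _ _)
        · have hcard : ((M.filter (fun i : Fin n => (i : ℕ) < k + 1)).card : ℝ)
              = ((M.filter (fun i : Fin n => (i : ℕ) < k)).card : ℝ) + 1 := by
            rw [hins, Finset.card_insert_of_notMem hnot]
            push_cast; ring
          have hexp : ‖w (k + 1)‖ ^ 2
              = ‖w k‖ ^ 2 + 2 * (inner ℝ (w k) (y i0 • Φ i0) : ℝ) + ‖y i0 • Φ i0‖ ^ 2 := by
            rw [hwk1]; exact norm_add_sq_real (w k) (y i0 • Φ i0)
          have hip : (inner ℝ (w k) (y i0 • Φ i0) : ℝ) = y i0 * (inner ℝ (w k) (Φ i0) : ℝ) :=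
            real_inner_smul_right _ _ _
          have hnr : ‖y i0 • Φ i0‖ ≤ r := by
            rw [norm_smul]
            have : ‖y i0‖ = 1 := by rcases hy i0 with h | h <;> simp [h]
            rw [this, one_mul]; exact hΦ i0
          have hnr2 : ‖y i0 • Φ i0‖ ^ 2 ≤ r ^ 2 := by
            have := norm_nonneg (y i0 • Φ i0); nlinarith
          rw [hcard, hexp, hip]
          nlinarith
      · have heq : M.filter (fun i : Fin n => (i : ℕ) < k + 1)
            = M.filter (fun i : Fin n => (i : ℕ) < k) := by
          ext j
          simp only [Finset.mem_filter]
          constructor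
          · rintro ⟨hj, hjk⟩
            refine ⟨hj, ?_⟩
            rcases Nat.lt_succ_iff_lt_or_eq.mp hjk with h | h
            · exact h
            · exfalso
              have hji : j = i0 := Fin.ext h
              rw [hM, Finset.mem_filter] at hj
              exact hc (by rw [hji, hval] at hj; exact hj.2)
          · rintro ⟨hj, hjk⟩
            exact ⟨hj, by omega⟩
        have hwk1 : w (k + 1) = w k := by rw [hs, if_neg hc]
        rw [heq, hwk1]
        exact ⟨ih1, ih2⟩
  obtain ⟨hsum, hnorm⟩ := key n le_rfl
  have hMfull : M.filter (fun i : Fin n => (i : ℕ) < n) = M := by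
    apply Finset.filter_true_of_mem; intro i _; exact i.isLt
  rw [hMfull] at hsum hnorm
  set L : ℝ := ∑ i ∈ M, max 0 (1 - y i * (inner ℝ u (Φ i) : ℝ)) with hL
  have hL0 : 0 ≤ L := by
    apply Finset.sum_nonneg; intro i _; exact le_max_left _ _
  -- inner product with u
  have hinner : (inner ℝ u (w n) : ℝ) = ∑ i ∈ M, y i * (inner ℝ u (Φ i) : ℝ) := by
    rw [hsum, inner_sum]
    exact Finset.sum_congr rfl fun i _ => real_inner_smul_right _ _ _
  have h1 : (M.card : ℝ) ≤ L + (inner ℝ u (w n) : ℝ) := by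
    rw [hinner, hL]
    have hcard : (M.card : ℝ) = ∑ _i ∈ M, (1 : ℝ) := by simp
    rw [hcard, ← Finset.sum_add_distrib]
    apply Finset.sum_le_sum
    intro i _
    have := le_max_right 0 (1 - y i * (inner ℝ u (Φ i) : ℝ))
    linarith
  have hwn : ‖w n‖ ≤ r * Real.sqrt (M.card : ℝ) := by
    have hsq : (r * Real.sqrt (M.card : ℝ)) ^ 2 = ((M.card : ℝ)) * r ^ 2 := by
      rw [mul_pow, Real.sq_sqrt (by positivity)]; ring
    calc ‖w n‖ = Real.sqrt (‖w n‖ ^ 2) := (Real.sqrt_sq (norm_nonneg _)).symm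
      _ ≤ Real.sqrt ((r * Real.sqrt (M.card : ℝ)) ^ 2) := by
          apply Real.sqrt_le_sqrt; rw [hsq]; exact hnorm
      _ = r * Real.sqrt (M.card : ℝ) := Real.sqrt_sq (by positivity)
  have h2 : (inner ℝ u (w n) : ℝ) ≤ r * ‖u‖ * Real.sqrt (M.card : ℝ) := by
    calc (inner ℝ u (w n) : ℝ) ≤ ‖u‖ * ‖w n‖ := real_inner_le_norm u (w n)
      _ ≤ ‖u‖ * (r * Real.sqrt (M.card : ℝ)) := by
          apply mul_le_mul_of_nonneg_left hwn (norm_nonneg u)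
      _ = r * ‖u‖ * Real.sqrt (M.card : ℝ) := by ring
  have hmain : (M.card : ℝ) ≤ L + (r * ‖u‖) * Real.sqrt (M.card : ℝ) := by
    linarith
  have hfin : (M.card : ℝ) ≤ L + (r * ‖u‖) * Real.sqrt L + (r * ‖u‖) ^ 2 :=
    perceptron_aux (by positivity) hL0 (by positivity) hmain
  have hsq : (r * ‖u‖) ^ 2 = r ^ 2 * ‖u‖ ^ 2 := by ring
  constructor
  · linarith [hfin]
  · set L' : ℝ := ∑ i, max 0 (1 - y i * (inner ℝ u (Φ i) : ℝ)) with hL'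
    have hLL' : L ≤ L' := by
      rw [hL, hL']
      apply Finset.sum_le_sum_of_subset_of_nonneg (Finset.filter_subset _ _)
      intro i _ _; exact le_max_left _ _
    have hL'0 : 0 ≤ L' := le_trans hL0 hLL'
    have hsqrt : Real.sqrt L ≤ Real.sqrt L' := Real.sqrt_le_sqrt hLL'
    have : (r * ‖u‖) * Real.sqrt L ≤ (r * ‖u‖) * Real.sqrt L' :=
      mul_le_mul_of_nonneg_left hsqrt (by positivity)
    linarith [hfin]
end

section
/- For every ε > 0 there exists an SVM problem (a data distribution, a finite sample, and regularization λ = 2ε) together with a dual feasible point α ∈ [0, 1/(λn)]ⁿ such that α is ε-suboptimal in the dual objective D, while the corresponding primal point w = Σᵢ αᵢ yᵢ xᵢ satisfies P(w) − P* ≥ 1 − ε. Concretely, α = 0 works: there exists u with ‖u‖ = 1 and zero hinge loss on the data, P* ≤ ε, D* − D(0) ≤ ε, and P(0) − P* ≥ 1 − ε. -/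
open Finset

theorem dual_suboptimality_does_not_control_primal :
    ∀ ε : ℝ, 0 < ε →
      ∃ (d n : ℕ), 0 < n ∧
      ∃ (x : Fin n → EuclideanSpace ℝ (Fin d)) (y : Fin n → ℝ),
        (∀ i, y i = 1 ∨ y i = -1) ∧
        -- separable with margin: ∃ u, ‖u‖ = 1, zero hinge loss on the data
        (∃ u : EuclideanSpace ℝ (Fin d), ‖u‖ = 1 ∧ ∀ i, 1 ≤ y i * (inner ℝ u (x i) : ℝ)) ∧
        -- with λ = 2ε, primal P and dual D as below:
        (let lam : ℝ := 2 * ε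
         let P : EuclideanSpace ℝ (Fin d) → ℝ := fun w =>
           lam / 2 * ‖w‖ ^ 2 + (1 / (n : ℝ)) * ∑ i, max 0 (1 - y i * (inner ℝ w (x i) : ℝ))
         let D : (Fin n → ℝ) → ℝ := fun α =>
           lam * ((∑ i, α i) -
             (1 : ℝ) / 2 * ∑ i, ∑ j, α i * α j * (y i * y j * (inner ℝ (x i) (x j) : ℝ)))
         -- P* ≤ ε
         (⨅ w, P w) ≤ ε ∧
         -- α = 0 is dual feasible and ε-suboptimal in the dual: D* − D(0) ≤ ε
         (∀ i : Fin n, (0 : ℝ) ∈ Set.Icc (0 : ℝ) (1 / (lam * n))) ∧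
         (⨆ α ∈ {α : Fin n → ℝ | ∀ i, α i ∈ Set.Icc (0 : ℝ) (1 / (lam * n))}, D α)
             - D 0 ≤ ε ∧
         -- yet the corresponding primal point w = Σᵢ 0·yᵢxᵢ = 0 is (1−ε)-suboptimal
         1 - ε ≤ P 0 - (⨅ w, P w)) := by
  intro ε hε
  refine ⟨1, 1, one_pos, fun _ => EuclideanSpace.single (0:Fin 1) (1:ℝ), fun _ => 1,
    fun _ => Or.inl rfl, ⟨EuclideanSpace.single (0:Fin 1) (1:ℝ), ?_, ?_⟩, ?_⟩
  · simp [EuclideanSpace.norm_single]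
  · intro i
    simp [EuclideanSpace.inner_single_left, EuclideanSpace.single_apply]
  intro lam P D
  have hinner : (inner ℝ (EuclideanSpace.single (0:Fin 1) (1:ℝ)) (EuclideanSpace.single (0:Fin 1) (1:ℝ)) : ℝ) = 1 := by
    simp [EuclideanSpace.inner_single_left, EuclideanSpace.single_apply]
  have hPnonneg : ∀ w, 0 ≤ P w := by
    intro w
    have h1 : 0 ≤ lam / 2 * ‖w‖ ^ 2 := by positivity
    have h2 : 0 ≤ (1 : ℝ) / (1:ℕ) * ∑ i : Fin 1, max 0 (1 - (1:ℝ) * (inner ℝ w (EuclideanSpace.single (0:Fin 1) (1:ℝ)) : ℝ)) := by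
      positivity
    exact add_nonneg h1 h2
  have hbdd : BddBelow (Set.range P) := ⟨0, by rintro _ ⟨w, rfl⟩; exact hPnonneg w⟩
  have hPu : P (EuclideanSpace.single (0:Fin 1) (1:ℝ)) = ε := by
    simp [P, lam, hinner, EuclideanSpace.norm_single]
  have hinf : (⨅ w, P w) ≤ ε := hPu ▸ ciInf_le hbdd _
  refine ⟨hinf, ?_, ?_, ?_⟩
  · intro i
    constructor
    · exact le_refl 0
    · positivity
  · have hD0 : D 0 = 0 := by simp [D]
    have hDle : ∀ α : Fin 1 → ℝ, D α ≤ ε := by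
      intro α
      simp only [D, lam, Fin.sum_univ_one, hinner]
      nlinarith [sq_nonneg (α 0 - 1)]
    have hsup : (⨆ α ∈ {α : Fin 1 → ℝ | ∀ i, α i ∈ Set.Icc (0 : ℝ) (1 / (lam * ((1:ℕ):ℝ)))}, D α) ≤ ε := by
      apply Real.iSup_le _ hε.le
      intro α
      exact Real.iSup_le (fun _ => hDle α) hε.le
    rw [hD0]
    linarith
  · have hP0 : P 0 = 1 := by simp [P]
    rw [hP0]
    linarith
end

section
/- Let α ∈ [0, C]ⁿ with C = 1/(λn) and w = Σᵢ αᵢyᵢxᵢ. If the duality gap P(w) − D(α) is at most 2ε, then the number of nonzero entries of α satisfies ‖α‖₀ ≥ n(P(w*) − 2ε), where w* is the primal optimum. -/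
open Finset

theorem support_size_lower_bound_from_duality_gap
    {H : Type*} [NormedAddCommGroup H] [InnerProductSpace ℝ H]
    (n : ℕ) (hn : 0 < n) (lam : ℝ) (hlam : 0 < lam)
    (x : Fin n → H) (y : Fin n → ℝ) (hy : ∀ i, y i = 1 ∨ y i = -1)
    (α : Fin n → ℝ) (hα : ∀ i, α i ∈ Set.Icc (0 : ℝ) (1 / (lam * n)))
    (w wstar : H) (hw : w = ∑ i, α i • (y i • x i))
    -- wstar is the primal optimum
    (hstar : ∀ v : H,
      lam / 2 * ‖wstar‖ ^ 2 + (1 / (n : ℝ)) * ∑ i, max 0 (1 - y i * (inner ℝ wstar (x i) : ℝ)) ≤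
        lam / 2 * ‖v‖ ^ 2 + (1 / (n : ℝ)) * ∑ i, max 0 (1 - y i * (inner ℝ v (x i) : ℝ)))
    (ε : ℝ)
    -- duality gap P(w) − D(α) ≤ 2ε
    (hgap :
      (lam / 2 * ‖w‖ ^ 2 + (1 / (n : ℝ)) * ∑ i, max 0 (1 - y i * (inner ℝ w (x i) : ℝ))) -
        lam * ((∑ i, α i) -
          (1 : ℝ) / 2 * ∑ i, ∑ j, α i * α j * (y i * y j * (inner ℝ (x i) (x j) : ℝ))) ≤ 2 * ε) :
    (n : ℝ) * ((lam / 2 * ‖wstar‖ ^ 2 +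
        (1 / (n : ℝ)) * ∑ i, max 0 (1 - y i * (inner ℝ wstar (x i) : ℝ))) - 2 * ε) ≤
      ((Finset.univ.filter (fun i : Fin n => α i ≠ 0)).card : ℝ) := by
  have hn' : (0 : ℝ) < n := by exact_mod_cast hn
  -- the double sum equals ‖w‖²
  have hnorm : ∑ i, ∑ j, α i * α j * (y i * y j * (inner ℝ (x i) (x j) : ℝ)) = ‖w‖ ^ 2 := by
    rw [hw, ← real_inner_self_eq_norm_sq]
    simp_rw [sum_inner, inner_sum, real_inner_smul_left, real_inner_smul_right]
    refine Finset.sum_congr rfl fun i _ => Finset.sum_congr rfl fun j _ => by ring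
  -- P(w*) ≤ P(w)
  have hPw := hstar w
  -- so P(w*) - 2ε ≤ D(α) ≤ lam * ∑ α
  have hD : lam / 2 * ‖wstar‖ ^ 2 +
      (1 / (n : ℝ)) * ∑ i, max 0 (1 - y i * (inner ℝ wstar (x i) : ℝ)) - 2 * ε ≤
      lam * ∑ i, α i := by
    have hw2 : (0:ℝ) ≤ ‖w‖ ^ 2 := by positivity
    nlinarith [hgap, hnorm]
  -- ∑ α ≤ card / (lam * n)
  have hsum : ∑ i, α i ≤
      ((Finset.univ.filter (fun i : Fin n => α i ≠ 0)).card : ℝ) * (1 / (lam * n)) := by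
    rw [← Finset.sum_filter_ne_zero Finset.univ]
    calc ∑ i ∈ Finset.univ.filter (fun i : Fin n => α i ≠ 0), α i
        ≤ ∑ _i ∈ Finset.univ.filter (fun i : Fin n => α i ≠ 0), (1 / (lam * n)) :=
          Finset.sum_le_sum fun i _ => (hα i).2
      _ = _ := by rw [Finset.sum_const, nsmul_eq_mul]
  have hpos : (0:ℝ) < lam * n := by positivity
  have := mul_le_mul_of_nonneg_left hsum (le_of_lt hlam)
  have hfin : lam * ∑ i, α i ≤
      ((Finset.univ.filter (fun i : Fin n => α i ≠ 0)).card : ℝ) / n := by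
    calc lam * ∑ i, α i ≤ lam * (((Finset.univ.filter (fun i : Fin n => α i ≠ 0)).card : ℝ) *
          (1 / (lam * n))) := this
      _ = ((Finset.univ.filter (fun i : Fin n => α i ≠ 0)).card : ℝ) / n := by
          field_simp
  have h1 : lam / 2 * ‖wstar‖ ^ 2 +
      (1 / (n : ℝ)) * ∑ i, max 0 (1 - y i * (inner ℝ wstar (x i) : ℝ)) - 2 * ε ≤
      ((Finset.univ.filter (fun i : Fin n => α i ≠ 0)).card : ℝ) / n := hD.trans hfin
  calc (n : ℝ) * ((lam / 2 * ‖wstar‖ ^ 2 +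
        (1 / (n : ℝ)) * ∑ i, max 0 (1 - y i * (inner ℝ wstar (x i) : ℝ))) - 2 * ε)
      ≤ (n : ℝ) * (((Finset.univ.filter (fun i : Fin n => α i ≠ 0)).card : ℝ) / n) := by
        exact mul_le_mul_of_nonneg_left (by linarith) (le_of_lt hn')
    _ = _ := by field_simp
end

section
/- For shift-invariant approximation via random Fourier features with Gaussian samples v₁,…,v_k ~ N(0, I_d) i.i.d., the map P(x) ∈ ℝ^{2k} with entries P(x)_{2i} = (1/√k)cos(⟨vᵢ,x⟩/σ) and P(x)_{2i+1} = (1/√k)sin(⟨vᵢ,x⟩/σ) satisfies E[⟨P(x),P(x')⟩] = exp(−‖x−x'‖²/(2σ²)) for all x, x' ∈ ℝᵈ, i.e., the inner product of Fourier features is an unbiased estimator of the Gaussian kernel. -/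
open Finset MeasureTheory ProbabilityTheory
open scoped ENNReal NNReal Real

lemma rff_charfun_gauss (a : ℝ) :
    ∫ t : ℝ, Complex.exp (Complex.I * a * t) ∂(gaussianReal 0 1) =
      (Real.exp (-a ^ 2 / 2) : ℂ) := by
  rw [gaussianReal_of_var_ne_zero 0 one_ne_zero]
  have hmeas : Measurable fun t : ℝ => (gaussianPDFReal 0 1 t).toNNReal :=
    (measurable_gaussianPDFReal 0 1).real_toNNReal
  have hd : gaussianPDF 0 1 = fun t => ((gaussianPDFReal 0 1 t).toNNReal : ℝ≥0∞) := by
    ext t; simp [gaussianPDF, ENNReal.ofReal]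
  rw [hd, integral_withDensity_eq_integral_smul hmeas]
  have hpdf : ∀ t : ℝ, ((gaussianPDFReal 0 1 t).toNNReal : ℝ) • Complex.exp (Complex.I * a * t)
      = ((Real.sqrt (2 * π))⁻¹ : ℂ) *
        (Complex.exp (Complex.I * a * t) * Complex.exp (-(1/2 : ℂ) * (t:ℝ) ^ 2)) := by
    intro t
    rw [Real.coe_toNNReal _ (gaussianPDFReal_nonneg 0 1 t)]
    simp only [gaussianPDFReal, NNReal.coe_one, mul_one, sub_zero]
    rw [Complex.real_smul]
    push_cast
    ring_nf
  calc ∫ t : ℝ, (gaussianPDFReal 0 1 t).toNNReal • Complex.exp (Complex.I * a * t)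
      = ∫ t : ℝ, ((Real.sqrt (2 * π))⁻¹ : ℂ) *
        (Complex.exp (Complex.I * a * t) * Complex.exp (-(1/2 : ℂ) * (t:ℝ) ^ 2)) := by
        congr 1; ext t; rw [← hpdf t]; rfl
    _ = ((Real.sqrt (2 * π))⁻¹ : ℂ) * ((π / (1/2 : ℂ)) ^ (1 / 2 : ℂ) *
          Complex.exp (-(a:ℂ) ^ 2 / (4 * (1/2 : ℂ)))) := by
        rw [integral_const_mul]
        congr 1
        exact fourierIntegral_gaussian (by norm_num) (a : ℂ)
    _ = (Real.exp (-a ^ 2 / 2) : ℂ) := by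
        have h1 : (π / (1/2 : ℂ)) ^ (1 / 2 : ℂ) = (Real.sqrt (2 * π) : ℂ) := by
          rw [Real.sqrt_eq_rpow, Complex.ofReal_cpow (by positivity)]
          push_cast
          norm_num
          congr 1
          ring
        rw [h1, Complex.ofReal_exp]
        have h2 : ((Real.sqrt (2 * π) : ℂ))⁻¹ * (Real.sqrt (2 * π) : ℂ) = 1 := by
          rw [inv_mul_cancel₀]
          simpa using Real.sqrt_ne_zero'.2 (by positivity)
        rw [← mul_assoc, h2, one_mul]
        norm_num

lemma rff_pi_map_eval {ι : Type*} [Fintype ι] [DecidableEq ι] {α : ι → Type*}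
    [∀ i, MeasurableSpace (α i)]
    (μ : ∀ i, Measure (α i)) [∀ i, IsProbabilityMeasure (μ i)] (i : ι) :
    (Measure.pi μ).map (Function.eval i) = μ i := by
  ext s hs
  rw [Measure.map_apply (measurable_pi_apply i) hs]
  have h : Function.eval i ⁻¹' s
      = Set.pi Set.univ (Function.update (fun j => (Set.univ : Set (α j))) i s) := by
    ext v
    simp only [Set.mem_preimage, Function.eval, Set.mem_pi, Set.mem_univ, true_implies]
    constructor
    · intro hv j
      rcases eq_or_ne j i with rfl | hj
      · simpa using hv
      · simp [Function.update_of_ne hj]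
    · intro hv
      simpa using hv i
  rw [h, Measure.pi_pi]
  rw [Fintype.prod_eq_single i (fun j hj => by simp [Function.update_of_ne hj])]
  simp

section
noncomputable local instance : MeasureSpace ℝ := ⟨gaussianReal 0 1⟩

lemma rff_gauss_prod_integral (n : ℕ) (f : Fin n → ℝ → ℂ) :
    ∫ w : Fin n → ℝ, ∏ j, f j (w j) ∂(Measure.pi fun _ : Fin n => gaussianReal 0 1)
      = ∏ j, ∫ t, f j t ∂(gaussianReal 0 1) := by
  haveI : SigmaFinite (volume : Measure ℝ) := inferInstanceAs (SigmaFinite (gaussianReal 0 1))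
  exact MeasureTheory.integral_fintype_prod_eq_prod (ι := Fin n) (fun j => f j)

end

lemma rff_gauss_cos (n : ℕ) (c : Fin n → ℝ) :
    ∫ w : Fin n → ℝ, Real.cos (∑ j, w j * c j) ∂(Measure.pi fun _ : Fin n => gaussianReal 0 1)
      = Real.exp (-(∑ j, c j ^ 2) / 2) := by
  set μ := (Measure.pi fun _ : Fin n => gaussianReal 0 1) with hμ
  have hcont : Continuous fun w : Fin n → ℝ =>
      Complex.exp (Complex.I * ((∑ j, w j * c j : ℝ) : ℂ)) := by fun_prop
  have hint : Integrable (fun w : Fin n → ℝ =>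
      Complex.exp (Complex.I * ((∑ j, w j * c j : ℝ) : ℂ))) μ := by
    refine Integrable.mono' (integrable_const 1) hcont.aestronglyMeasurable
      (ae_of_all _ fun w => ?_)
    simp [Complex.norm_exp]
  have hZ : ∫ w : Fin n → ℝ, Complex.exp (Complex.I * ((∑ j, w j * c j : ℝ) : ℂ)) ∂μ
      = ((Real.exp (-(∑ j, c j ^ 2) / 2) : ℝ) : ℂ) := by
    calc ∫ w : Fin n → ℝ, Complex.exp (Complex.I * ((∑ j, w j * c j : ℝ) : ℂ)) ∂μ
        = ∫ w : Fin n → ℝ, ∏ j, Complex.exp (Complex.I * (c j) * ((w j : ℝ) : ℂ)) ∂μ := by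
          congr 1; ext w
          rw [← Complex.exp_sum]
          congr 1
          push_cast
          rw [Finset.mul_sum]
          exact Finset.sum_congr rfl fun j _ => by ring
      _ = ∏ j, ∫ t : ℝ, Complex.exp (Complex.I * (c j) * t) ∂(gaussianReal 0 1) := by
          rw [hμ]
          exact rff_gauss_prod_integral n fun j t => Complex.exp (Complex.I * (c j) * t)
      _ = ∏ j, ((Real.exp (-(c j) ^ 2 / 2) : ℝ) : ℂ) :=
          Finset.prod_congr rfl fun j _ => rff_charfun_gauss (c j)
      _ = ((Real.exp (-(∑ j, c j ^ 2) / 2) : ℝ) : ℂ) := by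
          rw [← Complex.ofReal_prod, ← Real.exp_sum]
          norm_num [Finset.sum_div, neg_div]
  have key := integral_re hint
  calc ∫ w : Fin n → ℝ, Real.cos (∑ j, w j * c j) ∂μ
      = ∫ w : Fin n → ℝ, (Complex.exp (Complex.I * ((∑ j, w j * c j : ℝ) : ℂ))).re ∂μ := by
        congr 1; ext w
        rw [mul_comm]
        exact (Complex.exp_ofReal_mul_I_re _).symm
    _ = Real.exp (-(∑ j, c j ^ 2) / 2) := by
        rw [show (fun w : Fin n → ℝ => (Complex.exp (Complex.I * ((∑ j, w j * c j : ℝ) : ℂ))).re)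
          = fun w => RCLike.re (Complex.exp (Complex.I * ((∑ j, w j * c j : ℝ) : ℂ))) from rfl]
        rw [key, hZ, RCLike.re_to_complex, Complex.ofReal_re]

theorem random_fourier_features_unbiased
    (d k : ℕ) (hk : 0 < k) (σ : ℝ) (hσ : 0 < σ) (x x' : Fin d → ℝ) :
    (∫ v : Fin k → (Fin d → ℝ),
        ∑ i, (1 / (k : ℝ)) *
          (Real.cos ((∑ j, v i j * x j) / σ) * Real.cos ((∑ j, v i j * x' j) / σ) +
           Real.sin ((∑ j, v i j * x j) / σ) * Real.sin ((∑ j, v i j * x' j) / σ))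
        ∂(Measure.pi fun _ : Fin k => Measure.pi fun _ : Fin d => gaussianReal 0 1)) =
      Real.exp (-(∑ j, (x j - x' j) ^ 2) / (2 * σ ^ 2)) := by
  set c : Fin d → ℝ := fun j => (x j - x' j) / σ with hc
  set G := (Measure.pi fun _ : Fin d => gaussianReal 0 1) with hG
  set M := (Measure.pi fun _ : Fin k => Measure.pi fun _ : Fin d => gaussianReal 0 1) with hM
  have hcos : ∀ w : Fin d → ℝ,
      Real.cos ((∑ j, w j * x j) / σ) * Real.cos ((∑ j, w j * x' j) / σ) +
        Real.sin ((∑ j, w j * x j) / σ) * Real.sin ((∑ j, w j * x' j) / σ)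
      = Real.cos (∑ j, w j * c j) := by
    intro w
    rw [← Real.cos_sub]
    congr 1
    rw [div_sub_div_same, ← Finset.sum_sub_distrib, Finset.sum_div]
    exact Finset.sum_congr rfl fun j _ => by rw [← mul_sub, mul_div_assoc]
  have hgcont : Continuous fun w : Fin d → ℝ => Real.cos (∑ j, w j * c j) := by fun_prop
  have hInt : ∀ i : Fin k,
      Integrable (fun v : Fin k → Fin d → ℝ => (1 / (k : ℝ)) * Real.cos (∑ j, v i j * c j)) M := by
    intro i
    refine Integrable.mono' (integrable_const (1 / (k : ℝ)))
      ((continuous_const.mul (hgcont.comp (continuous_apply i))).aestronglyMeasurable) (ae_of_all _ fun v => ?_)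
    rw [norm_mul, Real.norm_eq_abs, Real.norm_eq_abs]
    calc |1 / (k : ℝ)| * |Real.cos (∑ j, v i j * c j)|
        ≤ |1 / (k : ℝ)| * 1 := by
          exact mul_le_mul_of_nonneg_left (Real.abs_cos_le_one _) (abs_nonneg _)
      _ = 1 / (k : ℝ) := by
          rw [mul_one, abs_of_nonneg (by positivity)]
  calc (∫ v : Fin k → (Fin d → ℝ),
        ∑ i, (1 / (k : ℝ)) *
          (Real.cos ((∑ j, v i j * x j) / σ) * Real.cos ((∑ j, v i j * x' j) / σ) +
           Real.sin ((∑ j, v i j * x j) / σ) * Real.sin ((∑ j, v i j * x' j) / σ)) ∂M)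
      = ∫ v : Fin k → (Fin d → ℝ),
          ∑ i, (1 / (k : ℝ)) * Real.cos (∑ j, v i j * c j) ∂M := by
        congr 1; ext v
        exact Finset.sum_congr rfl fun i _ => by rw [hcos (v i)]
    _ = ∑ i : Fin k, ∫ v : Fin k → (Fin d → ℝ),
          (1 / (k : ℝ)) * Real.cos (∑ j, v i j * c j) ∂M :=
        integral_finset_sum _ fun i _ => hInt i
    _ = ∑ i : Fin k, (1 / (k : ℝ)) * ∫ w : Fin d → ℝ, Real.cos (∑ j, w j * c j) ∂G := by
        refine Finset.sum_congr rfl fun i _ => ?_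
        rw [integral_const_mul]
        congr 1
        have := rff_pi_map_eval (fun _ : Fin k => G) i
        rw [hM, ← this, integral_map (measurable_pi_apply i).aemeasurable
          hgcont.aestronglyMeasurable]
    _ = ∑ i : Fin k, (1 / (k : ℝ)) * Real.exp (-(∑ j, c j ^ 2) / 2) := by
        rw [hG]
        simp [rff_gauss_cos d c]
    _ = Real.exp (-(∑ j, c j ^ 2) / 2) := by
        have hk' : (k : ℝ) ≠ 0 := Nat.cast_ne_zero.2 hk.ne'
        rw [Finset.sum_const, Finset.card_univ, Fintype.card_fin, nsmul_eq_mul, ← mul_assoc,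
          mul_one_div, div_self hk', one_mul]
    _ = Real.exp (-(∑ j, (x j - x' j) ^ 2) / (2 * σ ^ 2)) := by
        congr 1
        have : ∑ j, c j ^ 2 = (∑ j, (x j - x' j) ^ 2) / σ ^ 2 := by
          rw [Finset.sum_div]
          exact Finset.sum_congr rfl fun j _ => by rw [hc, div_pow]
        rw [this]
        ring
end

section
/- Let c ∈ ℝⁿ, V > 0, γ the water level with Σᵢ(γ−cᵢ)₊ = V, and ξ*ᵢ = (γ−cᵢ)₊. If p ∈ Δⁿ assigns pᵢ > pⱼ for two indices with ξ*ᵢ > 0 and ξ*ⱼ > 0, then p is not minimax optimal: there exists a feasible ξ with pᵀ(c+ξ) > γ, so max_{ξ⪰0,1ᵀξ≤V} pᵀ(c+ξ) > γ = min-max value. Hence any minimax optimal p must be constant on {i : cᵢ < γ}. -/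
open Finset

theorem minimax_optimal_p_constant_on_wet_set
    (n : ℕ) (hn : 0 < n) (c : Fin n → ℝ) (V γ : ℝ) (hV : 0 < V)
    -- the water level equation Σᵢ (γ − cᵢ)₊ = V
    (hγ : ∑ i, max 0 (γ - c i) = V)
    (p : Fin n → ℝ) (hp_nonneg : ∀ i, 0 ≤ p i) (hp_sum : ∑ i, p i = 1) :
    -- if p puts unequal mass on two wet indices, a feasible slack beats γ
    (∀ i j : Fin n, 0 < max 0 (γ - c i) → 0 < max 0 (γ - c j) → p j < p i →
      ∃ ξ : Fin n → ℝ, (∀ l, 0 ≤ ξ l) ∧ (∑ l, ξ l) ≤ V ∧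
        γ < ∑ l, p l * (c l + ξ l)) ∧
    -- hence any minimax optimal p is constant on {i : cᵢ < γ}
    ((∀ ξ : Fin n → ℝ, (∀ l, 0 ≤ ξ l) → (∑ l, ξ l) ≤ V →
        ∑ l, p l * (c l + ξ l) ≤ γ) →
      ∀ i j : Fin n, c i < γ → c j < γ → p i = p j) := by
  have key : ∀ i j : Fin n, 0 < max 0 (γ - c i) → 0 < max 0 (γ - c j) → p j < p i →
      ∃ ξ : Fin n → ℝ, (∀ l, 0 ≤ ξ l) ∧ (∑ l, ξ l) ≤ V ∧
        γ < ∑ l, p l * (c l + ξ l) := by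
    intro i j hi hj hij
    have hne : i ≠ j := by rintro rfl; exact lt_irrefl _ hij
    set ε := max 0 (γ - c j) with hε
    refine ⟨fun l => max 0 (γ - c l) + (if l = i then ε else 0) -
        (if l = j then ε else 0), ?_, ?_, ?_⟩
    · intro l
      by_cases hli : l = i
      · subst hli
        have h1 : (0:ℝ) ≤ max 0 (γ - c l) := le_max_left _ _
        have h2 : (0:ℝ) ≤ ε := le_of_lt hj
        simp only []
        split_ifs <;> linarith
      · by_cases hlj : l = j
        · subst hlj
          simp [if_neg hli, hε]
        · simp [hli, hlj, le_max_left]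
    · have h1 : ∀ l, max 0 (γ - c l) + (if l = i then ε else 0) -
          (if l = j then ε else 0)
          = (max 0 (γ - c l) + (if l = i then ε else 0)) -
          (if l = j then ε else 0) := fun l => rfl
      rw [Finset.sum_sub_distrib, Finset.sum_add_distrib, hγ]
      simp
    · have hsum1 : γ ≤ ∑ l, p l * (c l + max 0 (γ - c l)) := by
        calc γ = ∑ l, p l * γ := by rw [← Finset.sum_mul, hp_sum, one_mul]
        _ ≤ ∑ l, p l * (c l + max 0 (γ - c l)) := by
            apply Finset.sum_le_sum
            intro l _
            have h1 : γ ≤ c l + max 0 (γ - c l) := by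
              have := le_max_right 0 (γ - c l); linarith
            exact mul_le_mul_of_nonneg_left h1 (hp_nonneg l)
      have hexp : ∑ l, p l * (c l + (max 0 (γ - c l) + (if l = i then ε else 0) -
          (if l = j then ε else 0)))
          = (∑ l, p l * (c l + max 0 (γ - c l))) + p i * ε - p j * ε := by
        have : ∀ l, p l * (c l + (max 0 (γ - c l) + (if l = i then ε else 0) -
            (if l = j then ε else 0)))
            = p l * (c l + max 0 (γ - c l)) + (if l = i then p l * ε else 0) -
              (if l = j then p l * ε else 0) := by
          intro l
          split_ifs <;> ring
        simp only [this]
        rw [Finset.sum_sub_distrib, Finset.sum_add_distrib]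
        simp
      rw [hexp]
      have hpos : 0 < (p i - p j) * ε := mul_pos (by linarith) hj
      linarith
  refine ⟨key, ?_⟩
  intro h i j hi hj
  have hwi : 0 < max 0 (γ - c i) := lt_max_of_lt_right (by linarith)
  have hwj : 0 < max 0 (γ - c j) := lt_max_of_lt_right (by linarith)
  by_contra hne
  rcases lt_or_gt_of_ne hne with hlt | hgt
  · obtain ⟨ξ, h1, h2, h3⟩ := key j i hwj hwi hlt
    exact absurd (h ξ h1 h2) (not_le.mpr h3)
  · obtain ⟨ξ, h1, h2, h3⟩ := key i j hwi hwj hgt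
    exact absurd (h ξ h1 h2) (not_le.mpr h3)
end

section
/- If the expected number of Perceptron mistakes on an i.i.d. sample of size n is at most nL(u) + r‖u‖√(nL(u)) + r²‖u‖², then choosing n = O(((L(u)+ε)/ε)·(r²‖u‖²/ε)) guarantees that the classifier w sampled uniformly from the Perceptron iterates w₁,…,wₙ satisfies E[L₀/₁(w)] ≤ L(u) + ε. -/
theorem perceptron_online_to_batch_sample_size :
    ∃ C > 0, ∀ (n : ℕ) (L r nu ε E : ℝ),
      0 < n → 0 ≤ L → 0 ≤ r → 0 ≤ nu → 0 < ε →
      -- online-to-batch: E[L₀/₁(w)] = (1/n)·E[#mistakes], bounded via the mistake bound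
      E ≤ ((n : ℝ) * L + r * nu * Real.sqrt ((n : ℝ) * L) + r ^ 2 * nu ^ 2) / n →
      -- sample size n = O(((L(u)+ε)/ε)·(r²‖u‖²/ε))
      C * ((L + ε) / ε) * (r ^ 2 * nu ^ 2 / ε) ≤ (n : ℝ) →
      E ≤ L + ε := by
  refine ⟨4, by norm_num, ?_⟩
  intro n L r nu ε E hn hL hr hnu hε hE hN
  have hn' : (0:ℝ) < n := by exact_mod_cast hn
  set s := Real.sqrt ((n : ℝ) * L) with hs
  have hs0 : 0 ≤ s := Real.sqrt_nonneg _
  have hs2 : s ^ 2 = (n : ℝ) * L := Real.sq_sqrt (by positivity)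
  have hkey : 4 * (L + ε) * (r ^ 2 * nu ^ 2) ≤ (n : ℝ) * ε ^ 2 := by
    have h := mul_le_mul_of_nonneg_right hN (le_of_lt (by positivity : (0:ℝ) < ε ^ 2))
    have heq : 4 * ((L + ε) / ε) * (r ^ 2 * nu ^ 2 / ε) * ε ^ 2
        = 4 * (L + ε) * (r ^ 2 * nu ^ 2) := by
      field_simp
    rw [heq] at h
    linarith
  have hx : r * nu * s ≤ ε * n / 2 := by
    have hsq : (r * nu * s) ^ 2 ≤ (ε * n / 2) ^ 2 := by
      have : (r * nu * s) ^ 2 = r ^ 2 * nu ^ 2 * ((n : ℝ) * L) := by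
        rw [mul_pow, mul_pow, hs2]
      rw [this]
      nlinarith [mul_nonneg (mul_nonneg (by positivity : (0:ℝ) ≤ r ^ 2 * nu ^ 2) hε.le) hn'.le]
    nlinarith [mul_nonneg (mul_nonneg hr hnu) hs0, mul_pos hε hn']
  have hA : r ^ 2 * nu ^ 2 ≤ ε * n / 2 := by
    nlinarith [mul_nonneg (by positivity : (0:ℝ) ≤ r ^ 2 * nu ^ 2) hL]
  have hfin : ((n : ℝ) * L + r * nu * s + r ^ 2 * nu ^ 2) / n ≤ L + ε := by
    rw [div_le_iff₀ hn']
    nlinarith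
  linarith
end
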